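/- For the flat connection (all Christoffel symbols zero), the foliation by level sets of a smooth function f with nonvanishing gradient is totally geodesic (i.e. each level curve is a straight line) if and only if Flex f = 0: concretely, if Flex f = 0 and ∇f ≠ 0 on a convex open set U, then each connected component of each level set of f is contained in an affine line. -/

import Mathlib

open Real

/-- partial derivative in the x-direction -/
noncomputable def px (f : ℝ × ℝ → ℝ) (p : ℝ × ℝ) : ℝ := fderiv ℝ f p (1, 0)

/-- partial derivative in the y-direction -/
noncomputable def py (f : ℝ × ℝ → ℝ) (p : ℝ × ℝ) : ℝ := fderiv ℝ f p (0, 1)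

/-- Flex f = f_y² f_xx − 2 f_x f_y f_xy + f_x² f_yy -/
noncomputable def Flex (f : ℝ × ℝ → ℝ) (p : ℝ × ℝ) : ℝ :=
  (py f p) ^ 2 * px (px f) p - 2 * px f p * py f p * py (px f) p
    + (px f p) ^ 2 * py (py f) p

namespace FlexZero

open Set Metric

/-- Evaluation of a (total) Fréchet derivative on a vector via partial derivatives. -/
lemma fderiv_eval (g : ℝ × ℝ → ℝ) (q u : ℝ × ℝ) :
    fderiv ℝ g q u = u.1 * px g q + u.2 * py g q := by
  have hu : u = u.1 • ((1 : ℝ), (0 : ℝ)) + u.2 • ((0 : ℝ), (1 : ℝ)) := by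
    ext <;> simp
  conv_lhs => rw [hu]
  rw [map_add, map_smul, map_smul, px, py]
  simp [smul_eq_mul]

lemma cross_zero_of_orth {x y u : ℝ × ℝ} (hu : u ≠ 0)
    (hx : x.1 * u.1 + x.2 * u.2 = 0) (hy : y.1 * u.1 + y.2 * u.2 = 0) :
    x.1 * y.2 - x.2 * y.1 = 0 := by
  by_cases h1 : u.1 = 0
  · have h2 : u.2 ≠ 0 := by
      intro h2; exact hu (Prod.ext h1 h2)
    have hx2 : x.2 = 0 := by
      have : x.2 * u.2 = 0 := by rw [h1] at hx; linarith
      exact (mul_eq_zero.1 this).resolve_right h2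
    have hy2 : y.2 = 0 := by
      have : y.2 * u.2 = 0 := by rw [h1] at hy; linarith
      exact (mul_eq_zero.1 this).resolve_right h2
    rw [hx2, hy2]; ring
  · have key : (x.1 * y.2 - x.2 * y.1) * u.1 =
        y.2 * (x.1 * u.1 + x.2 * u.2) - x.2 * (y.1 * u.1 + y.2 * u.2) := by ring
    rw [hx, hy] at key
    simpa [h1] using mul_eq_zero.1 (by linarith [key] : (x.1 * y.2 - x.2 * y.1) * u.1 = 0)

lemma line_mem_iff {p v q : ℝ × ℝ} (hv : v ≠ 0) :
    (∃ t : ℝ, q = p + t • v) ↔ (q.1 - p.1) * v.2 - (q.2 - p.2) * v.1 = 0 := by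
  constructor
  · rintro ⟨t, rfl⟩
    simp [Prod.smul_def]
    ring
  · intro h
    by_cases h1 : v.1 = 0
    · have h2 : v.2 ≠ 0 := by intro h2; exact hv (Prod.ext h1 h2)
      have hq1 : q.1 - p.1 = 0 := by
        have : (q.1 - p.1) * v.2 = 0 := by rw [h1] at h; linarith
        exact (mul_eq_zero.1 this).resolve_right h2
      refine ⟨(q.2 - p.2) / v.2, ?_⟩
      ext
      · simp [h1]; linarith
      · simp [Prod.smul_def]
        field_simp
        ring
    · refine ⟨(q.1 - p.1) / v.1, ?_⟩
      ext
      · simp [Prod.smul_def]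
        field_simp
        ring
      · simp [Prod.smul_def]
        have : q.2 - p.2 = (q.1 - p.1) / v.1 * v.2 := by
          field_simp
          nlinarith [h]
        linarith

/-- The key algebraic identity: when the Flex vanishes, the second derivative of `f` along a
direction `v` is a multiple of the first derivative along `v`. -/
lemma algebra_step {a b A B C v1 v2 : ℝ} (hn : a ^ 2 + b ^ 2 ≠ 0)
    (hfl : b ^ 2 * A - 2 * a * b * B + a ^ 2 * C = 0) :
    (2 * (v2 * a - v1 * b) * (-(a * b) * A + (a ^ 2 - b ^ 2) * B + a * b * C)
        + (v1 * a + v2 * b) * (a ^ 2 * A + 2 * a * b * B + b ^ 2 * C))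
      / (a ^ 2 + b ^ 2) ^ 2 * (v1 * a + v2 * b)
      = v1 * (v1 * A + v2 * B) + v2 * (v1 * B + v2 * C) := by
  rw [div_mul_eq_mul_div, div_eq_iff (pow_ne_zero 2 hn)]
  linear_combination (-(v2 * a - v1 * b) ^ 2) * hfl

section Derivs

variable {U : Set (ℝ × ℝ)} {f : ℝ × ℝ → ℝ}

lemma hasFDerivAt_of_mem (hU : IsOpen U) (hf : ContDiffOn ℝ 2 f U) {q : ℝ × ℝ} (hq : q ∈ U) :
    HasFDerivAt f (fderiv ℝ f q) q :=
  ((hf.differentiableOn (by norm_num) q hq).differentiableAt (hU.mem_nhds hq)).hasFDerivAt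

lemma contDiffOn_px (hU : IsOpen U) (hf : ContDiffOn ℝ 2 f U) : ContDiffOn ℝ 1 (px f) U := by
  have h : ContDiffOn ℝ 1 (fderiv ℝ f) U := hf.fderiv_of_isOpen hU (by norm_num)
  exact h.clm_apply contDiffOn_const

lemma contDiffOn_py (hU : IsOpen U) (hf : ContDiffOn ℝ 2 f U) : ContDiffOn ℝ 1 (py f) U := by
  have h : ContDiffOn ℝ 1 (fderiv ℝ f) U := hf.fderiv_of_isOpen hU (by norm_num)
  exact h.clm_apply contDiffOn_const

lemma continuousOn_px' (hU : IsOpen U) {g : ℝ × ℝ → ℝ} (hg : ContDiffOn ℝ 1 g U) :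
    ContinuousOn (px g) U := by
  have h : ContDiffOn ℝ 0 (fderiv ℝ g) U := hg.fderiv_of_isOpen hU (by norm_num)
  exact (contDiffOn_zero.1 h).clm_apply continuousOn_const

lemma continuousOn_py' (hU : IsOpen U) {g : ℝ × ℝ → ℝ} (hg : ContDiffOn ℝ 1 g U) :
    ContinuousOn (py g) U := by
  have h : ContDiffOn ℝ 0 (fderiv ℝ g) U := hg.fderiv_of_isOpen hU (by norm_num)
  exact (contDiffOn_zero.1 h).clm_apply continuousOn_const

lemma hasFDerivAt_px (hU : IsOpen U) (hf : ContDiffOn ℝ 2 f U) {q : ℝ × ℝ} (hq : q ∈ U) :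
    HasFDerivAt (px f) (fderiv ℝ (px f) q) q :=
  (((contDiffOn_px hU hf).differentiableOn one_ne_zero q hq).differentiableAt
    (hU.mem_nhds hq)).hasFDerivAt

lemma hasFDerivAt_py (hU : IsOpen U) (hf : ContDiffOn ℝ 2 f U) {q : ℝ × ℝ} (hq : q ∈ U) :
    HasFDerivAt (py f) (fderiv ℝ (py f) q) q :=
  (((contDiffOn_py hU hf).differentiableOn one_ne_zero q hq).differentiableAt
    (hU.mem_nhds hq)).hasFDerivAt

/-- Schwarz symmetry of second derivatives. -/
lemma schwarz (hU : IsOpen U) (hf : ContDiffOn ℝ 2 f U) {q : ℝ × ℝ} (hq : q ∈ U) :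
    py (px f) q = px (py f) q := by
  have hΦd : DifferentiableAt ℝ (fderiv ℝ f) q := by
    have h : ContDiffOn ℝ 1 (fderiv ℝ f) U := hf.fderiv_of_isOpen hU (by norm_num)
    exact ((h.differentiableOn one_ne_zero) q hq).differentiableAt (hU.mem_nhds hq)
  have hx : HasFDerivAt (fderiv ℝ f) (fderiv ℝ (fderiv ℝ f) q) q := hΦd.hasFDerivAt
  have hev : ∀ᶠ y in nhds q, HasFDerivAt f (fderiv ℝ f y) y := by
    filter_upwards [hU.mem_nhds hq] with y hy
    exact hasFDerivAt_of_mem hU hf hy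
  have hsymm := second_derivative_symmetric_of_eventually hev hx
  have key : ∀ w u : ℝ × ℝ,
      fderiv ℝ (fun r => fderiv ℝ f r w) q u = fderiv ℝ (fderiv ℝ f) q u w := by
    intro w u
    have h2 : HasFDerivAt (fun _ : ℝ × ℝ => w) (0 : (ℝ × ℝ) →L[ℝ] (ℝ × ℝ)) q :=
      hasFDerivAt_const w q
    have h1 := hx.clm_apply h2
    rw [h1.fderiv]
    simp
  have e1 : py (px f) q = fderiv ℝ (fderiv ℝ f) q (0, 1) (1, 0) := key (1, 0) (0, 1)
  have e2 : px (py f) q = fderiv ℝ (fderiv ℝ f) q (1, 0) (0, 1) := key (0, 1) (1, 0)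
  rw [e1, e2, hsymm]

end Derivs

/-- Grönwall: a solution of `ψ' = κ ψ` with `ψ 0 = 0` vanishes (to the right). -/
lemma zero_of_deriv_right {ψ κ : ℝ → ℝ} {T : ℝ} (hT : 0 ≤ T)
    (hd : ∀ t ∈ Icc (0 : ℝ) T, HasDerivAt ψ (κ t * ψ t) t)
    (hκ : ContinuousOn κ (Icc 0 T)) (h0 : ψ 0 = 0) : ψ T = 0 := by
  obtain ⟨K, hK⟩ := isCompact_Icc.exists_bound_of_continuousOn hκ
  have hcont : ContinuousOn ψ (Icc 0 T) := fun t ht =>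
    (hd t ht).continuousAt.continuousWithinAt
  have hb := norm_le_gronwallBound_of_norm_deriv_right_le (δ := 0) (K := K) (ε := 0)
    (f := ψ) (f' := fun t => κ t * ψ t) (a := 0) (b := T) hcont
    (fun t ht => (hd t (Ico_subset_Icc_self ht)).hasDerivWithinAt)
    (by simp [h0])
    (fun t ht => by
      have h1 := hK t (Ico_subset_Icc_self ht)
      rw [norm_mul]
      have : ‖κ t‖ * ‖ψ t‖ ≤ K * ‖ψ t‖ :=
        mul_le_mul_of_nonneg_right h1 (norm_nonneg _)
      linarith)
  have hb' := hb T (right_mem_Icc.2 hT)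
  rw [gronwallBound_ε0_δ0] at hb'
  have := le_antisymm hb' (norm_nonneg _)
  simpa using this

lemma zero_of_deriv_uIcc {ψ κ : ℝ → ℝ} {T : ℝ}
    (hd : ∀ t ∈ uIcc (0 : ℝ) T, HasDerivAt ψ (κ t * ψ t) t)
    (hκ : ContinuousOn κ (uIcc 0 T)) (h0 : ψ 0 = 0) : ψ T = 0 := by
  rcases le_total 0 T with h | h
  · exact zero_of_deriv_right h (by rwa [uIcc_of_le h] at hd) (by rwa [uIcc_of_le h] at hκ) h0
  · have hI : uIcc (0 : ℝ) T = Icc T 0 := uIcc_of_ge h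
    have key := zero_of_deriv_right (ψ := fun s => ψ (-s)) (κ := fun s => -κ (-s)) (T := -T)
      (by linarith) ?_ ?_ (by simpa using h0)
    · simpa using key
    · intro t ht
      simp only [Set.mem_Icc] at ht
      have hmt : -t ∈ uIcc (0 : ℝ) T := by
        rw [hI]
        simp only [Set.mem_Icc]
        constructor <;> linarith
      have h1 : HasDerivAt (fun s => ψ (-s)) (κ (-t) * ψ (-t) * (-1)) t :=
        (hd (-t) hmt).comp t (hasDerivAt_neg t)
      convert h1 using 1
      ring
    · have hmaps : Set.MapsTo (fun s : ℝ => -s) (Icc 0 (-T)) (uIcc (0 : ℝ) T) := by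
        intro t ht
        simp only [Set.mem_Icc] at ht
        rw [hI]
        simp only [Set.mem_Icc]
        constructor <;> linarith
      exact (hκ.comp continuous_neg.continuousOn hmaps).neg

section Main

variable {U : Set (ℝ × ℝ)} {f : ℝ × ℝ → ℝ}

lemma seg_mem (hconv : Convex ℝ U) {q v : ℝ × ℝ} (hq : q ∈ U) {T : ℝ}
    (hT : q + T • v ∈ U) : ∀ t ∈ uIcc (0 : ℝ) T, q + t • v ∈ U := by
  intro t ht
  rw [← segment_eq_uIcc] at ht
  obtain ⟨α, β, hα, hβ, hαβ, hst⟩ := ht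
  have hst' : t = β * T := by
    simp only [smul_eq_mul, mul_zero, zero_add] at hst
    linarith [hst]
  have hvec : α • q + β • (q + T • v) = q + t • v := by
    have h1 : α = 1 - β := by linarith
    rw [h1, hst']
    ext
    · simp [Prod.smul_def]
      ring
    · simp [Prod.smul_def]
      ring
  rw [← hvec]
  exact hconv hq hT hα hβ hαβ

/-- Along the straight line through `q` in the tangent direction `(-f_y q, f_x q)`, the
gradient of `f` stays orthogonal to that direction. -/
lemma tangent_line_zero (hU : IsOpen U) (hconv : Convex ℝ U) (hf : ContDiffOn ℝ 2 f U)
    (hgrad : ∀ p ∈ U, (px f p, py f p) ≠ (0, 0))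
    (hflex : ∀ p ∈ U, Flex f p = 0)
    {q : ℝ × ℝ} (hq : q ∈ U) {T : ℝ}
    (hT : q + T • (-py f q, px f q) ∈ U) :
    (-py f q) * px f (q + T • (-py f q, px f q))
      + (px f q) * py f (q + T • (-py f q, px f q)) = 0 := by
  set v : ℝ × ℝ := (-py f q, px f q) with hv
  set γ : ℝ → ℝ × ℝ := fun t => q + t • v with hγdef
  have hγ0 : γ 0 = q := by simp [hγdef]
  have hmem : ∀ t ∈ uIcc (0 : ℝ) T, γ t ∈ U := fun t ht => seg_mem hconv hq hT t ht
  have hn : ∀ t ∈ uIcc (0 : ℝ) T, (px f (γ t)) ^ 2 + (py f (γ t)) ^ 2 ≠ 0 := by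
    intro t ht h
    apply hgrad (γ t) (hmem t ht)
    have ha0 : px f (γ t) = 0 := by nlinarith [sq_nonneg (px f (γ t)), sq_nonneg (py f (γ t))]
    have hb0 : py f (γ t) = 0 := by nlinarith [sq_nonneg (px f (γ t)), sq_nonneg (py f (γ t))]
    rw [Prod.mk.injEq]
    exact ⟨ha0, hb0⟩
  set ψ : ℝ → ℝ := fun t => v.1 * px f (γ t) + v.2 * py f (γ t) with hψdef
  set κ : ℝ → ℝ := fun t =>
    (2 * (v.2 * px f (γ t) - v.1 * py f (γ t)) *
        (-(px f (γ t) * py f (γ t)) * px (px f) (γ t)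
          + ((px f (γ t)) ^ 2 - (py f (γ t)) ^ 2) * py (px f) (γ t)
          + px f (γ t) * py f (γ t) * py (py f) (γ t))
      + (v.1 * px f (γ t) + v.2 * py f (γ t)) *
        ((px f (γ t)) ^ 2 * px (px f) (γ t)
          + 2 * px f (γ t) * py f (γ t) * py (px f) (γ t)
          + (py f (γ t)) ^ 2 * py (py f) (γ t)))
      / ((px f (γ t)) ^ 2 + (py f (γ t)) ^ 2) ^ 2 with hκdef
  have hψd : ∀ t ∈ uIcc (0 : ℝ) T, HasDerivAt ψ (κ t * ψ t) t := by
    intro t ht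
    have hr : γ t ∈ U := hmem t ht
    have hγ' : HasDerivAt γ v t := by
      have h := ((hasDerivAt_id t).smul_const v).const_add q
      simpa [hγdef] using h
    have hpa : HasDerivAt (fun s => px f (γ s)) (fderiv ℝ (px f) (γ t) v) t :=
      (hasFDerivAt_px hU hf hr).comp_hasDerivAt t hγ'
    have hpb : HasDerivAt (fun s => py f (γ s)) (fderiv ℝ (py f) (γ t) v) t :=
      (hasFDerivAt_py hU hf hr).comp_hasDerivAt t hγ'
    have hψ' : HasDerivAt ψ
        (v.1 * fderiv ℝ (px f) (γ t) v + v.2 * fderiv ℝ (py f) (γ t) v) t :=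
      (hpa.const_mul v.1).add (hpb.const_mul v.2)
    have e1 : fderiv ℝ (px f) (γ t) v
        = v.1 * px (px f) (γ t) + v.2 * py (px f) (γ t) := fderiv_eval (px f) (γ t) v
    have e2 : fderiv ℝ (py f) (γ t) v
        = v.1 * py (px f) (γ t) + v.2 * py (py f) (γ t) := by
      rw [fderiv_eval (py f) (γ t) v, ← schwarz hU hf hr]
    rw [e1, e2] at hψ'
    convert hψ' using 1
    have hflexr : (py f (γ t)) ^ 2 * px (px f) (γ t)
        - 2 * px f (γ t) * py f (γ t) * py (px f) (γ t)
        + (px f (γ t)) ^ 2 * py (py f) (γ t) = 0 := hflex (γ t) hr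
    exact algebra_step (hn t ht) hflexr
  have hγc : Continuous γ := by
    rw [hγdef]; fun_prop
  have hf1 : ContDiffOn ℝ 1 f U := hf.of_le (by norm_num)
  have hca : ContinuousOn (fun t => px f (γ t)) (uIcc (0 : ℝ) T) :=
    (continuousOn_px' hU hf1).comp hγc.continuousOn hmem
  have hcb : ContinuousOn (fun t => py f (γ t)) (uIcc (0 : ℝ) T) :=
    (continuousOn_py' hU hf1).comp hγc.continuousOn hmem
  have hcA : ContinuousOn (fun t => px (px f) (γ t)) (uIcc (0 : ℝ) T) :=
    (continuousOn_px' hU (contDiffOn_px hU hf)).comp hγc.continuousOn hmem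
  have hcB : ContinuousOn (fun t => py (px f) (γ t)) (uIcc (0 : ℝ) T) :=
    (continuousOn_py' hU (contDiffOn_px hU hf)).comp hγc.continuousOn hmem
  have hcC : ContinuousOn (fun t => py (py f) (γ t)) (uIcc (0 : ℝ) T) :=
    (continuousOn_py' hU (contDiffOn_py hU hf)).comp hγc.continuousOn hmem
  have hκc : ContinuousOn κ (uIcc (0 : ℝ) T) := by
    rw [hκdef]
    apply ContinuousOn.div
    · fun_prop
    · fun_prop
    · intro t ht
      exact pow_ne_zero 2 (hn t ht)
  have hψ0 : ψ 0 = 0 := by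
    rw [hψdef]
    simp only [hγ0, hv]
    ring
  have hfin := zero_of_deriv_uIcc hψd hκc hψ0
  rw [hψdef] at hfin
  simpa [hv, hγdef] using hfin

/-- `f` is constant along the tangent line as long as it stays inside `U`. -/
lemma level_const (hU : IsOpen U) (hconv : Convex ℝ U) (hf : ContDiffOn ℝ 2 f U)
    (hgrad : ∀ p ∈ U, (px f p, py f p) ≠ (0, 0))
    (hflex : ∀ p ∈ U, Flex f p = 0)
    {q : ℝ × ℝ} (hq : q ∈ U) {T : ℝ}
    (hT : q + T • (-py f q, px f q) ∈ U) :
    f (q + T • (-py f q, px f q)) = f q := by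
  set v : ℝ × ℝ := (-py f q, px f q) with hv
  set γ : ℝ → ℝ × ℝ := fun t => q + t • v with hγdef
  have hγ0 : γ 0 = q := by simp [hγdef]
  have hmem : ∀ t ∈ uIcc (0 : ℝ) T, γ t ∈ U := fun t ht => seg_mem hconv hq hT t ht
  have hd : ∀ t ∈ uIcc (0 : ℝ) T,
      HasDerivWithinAt (fun s => f (γ s)) ((fun _ => (0 : ℝ)) t) (uIcc (0 : ℝ) T) t := by
    intro t ht
    have hr : γ t ∈ U := hmem t ht
    have hγ' : HasDerivAt γ v t := by
      have h := ((hasDerivAt_id t).smul_const v).const_add q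
      simpa [hγdef] using h
    have h1 : HasDerivAt (fun s => f (γ s)) (fderiv ℝ f (γ t) v) t :=
      (hasFDerivAt_of_mem hU hf hr).comp_hasDerivAt t hγ'
    have h2 : fderiv ℝ f (γ t) v = 0 := by
      rw [fderiv_eval f (γ t) v]
      have h3 := tangent_line_zero hU hconv hf hgrad hflex hq (hmem t ht)
      rw [hv]
      simpa [hγdef, hv] using h3
    rw [h2] at h1
    exact h1.hasDerivWithinAt
  have hbd := Convex.norm_image_sub_le_of_norm_hasDerivWithin_le (C := 0) hd
    (fun x _ => by simp) (convex_uIcc (0 : ℝ) T) (left_mem_uIcc (a := (0 : ℝ)) (b := T))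
    (right_mem_uIcc (a := (0 : ℝ)) (b := T))
  have hEq : f (γ T) = f (γ 0) := by
    rw [← sub_eq_zero]
    have h0 : ‖f (γ T) - f (γ 0)‖ ≤ 0 := by simpa using hbd
    simpa using le_antisymm h0 (norm_nonneg _)
  rw [hγ0] at hEq
  simpa [hγdef] using hEq

set_option maxHeartbeats 1000000 in
/-- Locally, the level set of `f` through `q` is contained in the tangent line at `q`. -/
lemma local_level (hU : IsOpen U) (hconv : Convex ℝ U) (hf : ContDiffOn ℝ 2 f U)
    (hgrad : ∀ p ∈ U, (px f p, py f p) ≠ (0, 0))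
    (hflex : ∀ p ∈ U, Flex f p = 0)
    {q : ℝ × ℝ} (hq : q ∈ U) :
    ∃ ε > 0, ∀ r ∈ ball q ε, f r = f q →
      (r.1 - q.1) * px f q + (r.2 - q.2) * py f q = 0 := by
  set a := px f q with hadef
  set b := py f q with hbdef
  have hn : 0 < a ^ 2 + b ^ 2 := by
    have h := hgrad q hq
    have h' : a ≠ 0 ∨ b ≠ 0 := by
      by_contra hc
      push_neg at hc
      exact h (by rw [Prod.mk.injEq]; exact ⟨hc.1, hc.2⟩)
    rcases h' with h' | h'
    · nlinarith [sq_nonneg a, sq_nonneg b, mul_self_pos.mpr h']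
    · nlinarith [sq_nonneg a, sq_nonneg b, mul_self_pos.mpr h']
  have hf1 : ContDiffOn ℝ 1 f U := hf.of_le (by norm_num)
  set g : ℝ × ℝ → ℝ := fun x => a * px f x + b * py f x with hgdef
  have hgval : g q = a ^ 2 + b ^ 2 := by
    simp only [hgdef, ← hadef, ← hbdef]
    ring
  have hgc : ContinuousAt g q := by
    have h1 : ContinuousOn g U :=
      (continuousOn_const.mul (continuousOn_px' hU hf1)).add
        (continuousOn_const.mul (continuousOn_py' hU hf1))
    exact h1.continuousAt (hU.mem_nhds hq)
  have hnb : U ∩ g ⁻¹' (Ioi 0) ∈ nhds q := by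
    refine Filter.inter_mem (hU.mem_nhds hq) ?_
    exact hgc.preimage_mem_nhds (isOpen_Ioi.mem_nhds (by rw [Set.mem_Ioi, hgval]; exact hn))
  obtain ⟨δ, hδpos, hball⟩ := Metric.mem_nhds_iff.1 hnb
  set n := a ^ 2 + b ^ 2 with hndef
  set s := |a| + |b| with hsdef
  set M := s ^ 2 / n + 1 with hMdef
  have hs0 : 0 ≤ s := by positivity
  have hM0 : 0 < M := by positivity
  have hM1 : M - 1 = s ^ 2 / n := by rw [hMdef]; ring
  refine ⟨δ / M, by positivity, ?_⟩
  intro r hr hfr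
  by_contra hcon
  set d1 := r.1 - q.1 with hd1def
  set d2 := r.2 - q.2 with hd2def
  set α := (d2 * a - d1 * b) / n with hαdef
  set β := (d1 * a + d2 * b) / n with hβdef
  have hβ0 : β ≠ 0 := by
    rw [hβdef]
    exact div_ne_zero hcon (ne_of_gt hn)
  set D := dist r q with hDdef
  have hD0 : 0 ≤ D := dist_nonneg
  have hDM : D * M < δ := by
    have h1 : D < δ / M := mem_ball.1 hr
    rw [← lt_div_iff₀ hM0]
    exact h1
  have h1 : |d1| ≤ D := by
    rw [hDdef, Prod.dist_eq, hd1def, ← Real.dist_eq]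
    exact le_max_left _ _
  have h2 : |d2| ≤ D := by
    rw [hDdef, Prod.dist_eq, hd2def, ← Real.dist_eq]
    exact le_max_right _ _
  have hαb : |α| ≤ D * s / n := by
    rw [hαdef, abs_div, abs_of_pos hn, div_le_div_iff₀ hn hn]
    have : |d2 * a - d1 * b| ≤ D * s := by
      calc |d2 * a - d1 * b| ≤ |d2 * a| + |d1 * b| := abs_sub _ _
        _ = |d2| * |a| + |d1| * |b| := by rw [abs_mul, abs_mul]
        _ ≤ D * |a| + D * |b| :=
            add_le_add (mul_le_mul_of_nonneg_right h2 (abs_nonneg a))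
              (mul_le_mul_of_nonneg_right h1 (abs_nonneg b))
        _ = D * s := by rw [hsdef]; ring
    exact mul_le_mul_of_nonneg_right this hn.le
  have hβb : |β| ≤ D * s / n := by
    rw [hβdef, abs_div, abs_of_pos hn, div_le_div_iff₀ hn hn]
    have : |d1 * a + d2 * b| ≤ D * s := by
      calc |d1 * a + d2 * b| ≤ |d1 * a| + |d2 * b| := abs_add_le _ _
        _ = |d1| * |a| + |d2| * |b| := by rw [abs_mul, abs_mul]
        _ ≤ D * |a| + D * |b| :=
            add_le_add (mul_le_mul_of_nonneg_right h1 (abs_nonneg a))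
              (mul_le_mul_of_nonneg_right h2 (abs_nonneg b))
        _ = D * s := by rw [hsdef]; ring
    exact mul_le_mul_of_nonneg_right this hn.le
  have habs_a : |a| ≤ s := by rw [hsdef]; nlinarith [abs_nonneg b]
  have habs_b : |b| ≤ s := by rw [hsdef]; nlinarith [abs_nonneg a]
  have hsum : D * s / n * s = D * (M - 1) := by
    rw [hM1]
    ring
  have hfinal : D * (M - 1) < δ := by
    have hx : D * (M - 1) = D * M - D := by ring
    linarith
  set w : ℝ × ℝ := (-b, a) with hwdef
  set u : ℝ × ℝ := (a, b) with hudef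
  have hseg : ∀ t ∈ Icc (0 : ℝ) 1, q + α • w + t • (β • u) ∈ ball q δ := by
    intro t ht
    have hdiff : q + α • w + t • (β • u) - q
        = (α * (-b) + t * (β * a), α * a + t * (β * b)) := by
      ext
      · simp [hwdef, hudef, Prod.smul_def]
        ring
      · simp [hwdef, hudef, Prod.smul_def]
        ring
    rw [mem_ball, dist_eq_norm, hdiff]
    have hc1 : |α * (-b) + t * (β * a)| < δ := by
      have e1 : |α * (-b) + t * (β * a)| ≤ |α| * |b| + |β| * |a| := by
        calc |α * (-b) + t * (β * a)| ≤ |α * (-b)| + |t * (β * a)| := abs_add_le _ _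
          _ = |α| * |b| + |t| * (|β| * |a|) := by
              rw [abs_mul, abs_mul, abs_mul, abs_neg]
          _ ≤ |α| * |b| + 1 * (|β| * |a|) := by
              gcongr
              rw [abs_le]
              exact ⟨by linarith [ht.1], ht.2⟩
          _ = |α| * |b| + |β| * |a| := by ring
      have e2 : |α| * |b| + |β| * |a| ≤ D * (M - 1) := by
        calc |α| * |b| + |β| * |a|
            ≤ (D * s / n) * |b| + (D * s / n) * |a| :=
              add_le_add (mul_le_mul_of_nonneg_right hαb (abs_nonneg b))
                (mul_le_mul_of_nonneg_right hβb (abs_nonneg a))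
          _ = (D * s / n) * (|a| + |b|) := by ring
          _ = D * s / n * s := by rw [hsdef]
          _ = D * (M - 1) := hsum
      linarith
    have hc2 : |α * a + t * (β * b)| < δ := by
      have e1 : |α * a + t * (β * b)| ≤ |α| * |a| + |β| * |b| := by
        calc |α * a + t * (β * b)| ≤ |α * a| + |t * (β * b)| := abs_add_le _ _
          _ = |α| * |a| + |t| * (|β| * |b|) := by
              rw [abs_mul, abs_mul, abs_mul]
          _ ≤ |α| * |a| + 1 * (|β| * |b|) := by
              gcongr
              rw [abs_le]
              exact ⟨by linarith [ht.1], ht.2⟩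
          _ = |α| * |a| + |β| * |b| := by ring
      have e2 : |α| * |a| + |β| * |b| ≤ D * (M - 1) := by
        calc |α| * |a| + |β| * |b|
            ≤ (D * s / n) * |a| + (D * s / n) * |b| :=
              add_le_add (mul_le_mul_of_nonneg_right hαb (abs_nonneg a))
                (mul_le_mul_of_nonneg_right hβb (abs_nonneg b))
          _ = (D * s / n) * (|a| + |b|) := by ring
          _ = D * s / n * s := by rw [hsdef]
          _ = D * (M - 1) := hsum
      linarith
    have : ‖((α * (-b) + t * (β * a), α * a + t * (β * b)) : ℝ × ℝ)‖
        = max |α * (-b) + t * (β * a)| |α * a + t * (β * b)| := by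
      rw [Prod.norm_def, Real.norm_eq_abs, Real.norm_eq_abs]
    rw [this]
    exact max_lt hc1 hc2
  have hsU : q + α • w ∈ U := by
    have h0 : q + α • w + (0 : ℝ) • (β • u) ∈ ball q δ := hseg 0 ⟨le_rfl, zero_le_one⟩
    simp only [zero_smul, add_zero] at h0
    exact (hball h0).1
  have hfs : f (q + α • w) = f q := by
    have hw' : w = (-py f q, px f q) := by rw [hwdef, hadef, hbdef]
    rw [hw'] at hsU ⊢
    exact level_const hU hconv hf hgrad hflex hq hsU
  set x : ℝ → ℝ × ℝ := fun t => q + α • w + t • (β • u) with hxdef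
  have hxU : ∀ t ∈ Icc (0 : ℝ) 1, x t ∈ U := fun t ht => (hball (hseg t ht)).1
  have hder : ∀ t ∈ Icc (0 : ℝ) 1, HasDerivAt (fun s => f (x s)) (β * g (x t)) t := by
    intro t ht
    have hx' : HasDerivAt x (β • u) t := by
      have h := ((hasDerivAt_id t).smul_const (β • u)).const_add (q + α • w)
      simpa [hxdef] using h
    have hcomp := (hasFDerivAt_of_mem hU hf (hxU t ht)).comp_hasDerivAt t hx'
    have h2 : fderiv ℝ f (x t) (β • u) = β * g (x t) := by
      rw [fderiv_eval]
      simp only [hudef, hgdef, Prod.smul_def, smul_eq_mul]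
      ring
    rwa [h2] at hcomp
  obtain ⟨ξ, hξ, hsl⟩ := exists_hasDerivAt_eq_slope (fun s => f (x s)) (fun t => β * g (x t))
    one_pos (fun t ht => (hder t ht).continuousAt.continuousWithinAt)
    (fun t ht => hder t (Ioo_subset_Icc_self ht))
  have hx0 : x 0 = q + α • w := by simp [hxdef]
  have hx1 : x 1 = r := by
    show q + α • w + (1 : ℝ) • (β • u) = r
    rw [one_smul]
    have hkey : α • w + β • u = r - q := by
      ext
      · simp only [hwdef, hudef, Prod.fst_add, Prod.smul_fst, Prod.fst_sub, smul_eq_mul]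
        rw [hαdef, hβdef, hd1def, hd2def]
        field_simp
        rw [hndef]
        ring
      · simp only [hwdef, hudef, Prod.snd_add, Prod.smul_snd, Prod.snd_sub, smul_eq_mul]
        rw [hαdef, hβdef, hd1def, hd2def]
        field_simp
        rw [hndef]
        ring
    rw [add_assoc, hkey, add_sub_cancel]
  rw [hx0, hx1, hfr, hfs] at hsl
  simp only [sub_self, sub_zero, div_one] at hsl
  have hgpos : 0 < g (x ξ) := (hball (hseg ξ (Ioo_subset_Icc_self hξ))).2
  exact (mul_ne_zero hβ0 (ne_of_gt hgpos)) hsl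

end Main

end FlexZero

/-- For the flat connection, if Flex f = 0 and the gradient of f is nonvanishing on a
convex open set, then each connected component of each level set of f is contained in
an affine line. -/
theorem level_sets_are_lines_of_flex_zero
    (U : Set (ℝ × ℝ)) (hU : IsOpen U) (hconv : Convex ℝ U)
    (f : ℝ × ℝ → ℝ) (hf : ContDiffOn ℝ 2 f U)
    (hgrad : ∀ p ∈ U, (px f p, py f p) ≠ (0, 0))
    (hflex : ∀ p ∈ U, Flex f p = 0) :
    ∀ c : ℝ, ∀ p ∈ U, f p = c →
      ∃ v : ℝ × ℝ, v ≠ 0 ∧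
        connectedComponentIn {q ∈ U | f q = c} p ⊆ {q | ∃ t : ℝ, q = p + t • v} := by
  intro c p hp hfp
  classical
  set v : ℝ × ℝ := (-py f p, px f p) with hv
  have hv0 : v ≠ 0 := by
    intro h
    apply hgrad p hp
    have h1 : v.1 = 0 := by rw [h]; rfl
    have h2 : v.2 = 0 := by rw [h]; rfl
    rw [hv] at h1 h2
    simp only [neg_eq_zero] at h1
    rw [Prod.mk.injEq]
    exact ⟨h2, h1⟩
  refine ⟨v, hv0, ?_⟩
  set S := {q : ℝ × ℝ | q ∈ U ∧ f q = c} with hS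
  set C := connectedComponentIn S p with hC
  set L := {r : ℝ × ℝ | (r.1 - p.1) * v.2 - (r.2 - p.2) * v.1 = 0} with hL
  have hLclosed : IsClosed L := isClosed_eq (by fun_prop) continuous_const
  have hCS : C ⊆ S := connectedComponentIn_subset S p
  have hpS : p ∈ S := ⟨hp, hfp⟩
  have hpC : p ∈ C := mem_connectedComponentIn hpS
  have hpL : p ∈ L := by simp [hL]
  have key : ∀ q ∈ C ∩ L, ∃ ε > 0, ∀ r ∈ Metric.ball q ε, r ∈ S → r ∈ L := by
    intro q hqCL
    have hqS : q ∈ S := hCS hqCL.1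
    have hqU : q ∈ U := hqS.1
    obtain ⟨t₀, ht₀⟩ := (FlexZero.line_mem_iff hv0).2 hqCL.2
    have htan : v.1 * px f q + v.2 * py f q = 0 := by
      have hqU' : p + t₀ • (-py f p, px f p) ∈ U := by
        rw [← hv, ← ht₀]; exact hqU
      have h := FlexZero.tangent_line_zero hU hconv hf hgrad hflex hp hqU'
      rw [show p + t₀ • (-py f p, px f p) = q by rw [← hv, ← ht₀]] at h
      rw [hv]
      simpa using h
    obtain ⟨ε, hε, hloc⟩ := FlexZero.local_level hU hconv hf hgrad hflex hqU
    refine ⟨ε, hε, ?_⟩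
    intro r hr hrS
    have h1 := hloc r hr (by rw [hrS.2, hqS.2])
    have hg0 : ((px f q, py f q) : ℝ × ℝ) ≠ 0 := hgrad q hqU
    have hcross1 : (r.1 - q.1) * v.2 - (r.2 - q.2) * v.1 = 0 :=
      FlexZero.cross_zero_of_orth (x := (r.1 - q.1, r.2 - q.2)) (y := v)
        (u := (px f q, py f q)) hg0 h1 htan
    have hqL : (q.1 - p.1) * v.2 - (q.2 - p.2) * v.1 = 0 := hqCL.2
    show (r.1 - p.1) * v.2 - (r.2 - p.2) * v.1 = 0
    have expand : (r.1 - p.1) * v.2 - (r.2 - p.2) * v.1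
        = ((r.1 - q.1) * v.2 - (r.2 - q.2) * v.1)
          + ((q.1 - p.1) * v.2 - (q.2 - p.2) * v.1) := by ring
    rw [expand, hcross1, hqL, add_zero]
  choose! ε hεpos hεsub using key
  intro r hrC
  suffices hrL : r ∈ L by exact (FlexZero.line_mem_iff hv0).2 hrL
  by_contra hrL
  set V1 := ⋃ (q : ℝ × ℝ) (_ : q ∈ C ∩ L), Metric.ball q (ε q) with hV1
  have hV1open : IsOpen V1 := isOpen_biUnion fun q _ => Metric.isOpen_ball
  have hpre : IsPreconnected C := isPreconnected_connectedComponentIn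
  have hsub : C ⊆ V1 ∪ Lᶜ := by
    intro x hx
    by_cases hxL : x ∈ L
    · exact Or.inl (Set.mem_biUnion ⟨hx, hxL⟩ (Metric.mem_ball_self (hεpos x ⟨hx, hxL⟩)))
    · exact Or.inr hxL
  have hne1 : (C ∩ V1).Nonempty :=
    ⟨p, hpC, Set.mem_biUnion ⟨hpC, hpL⟩ (Metric.mem_ball_self (hεpos p ⟨hpC, hpL⟩))⟩
  have hne2 : (C ∩ Lᶜ).Nonempty := ⟨r, hrC, hrL⟩
  obtain ⟨y, hyC, hyV1, hyL⟩ := hpre V1 Lᶜ hV1open hLclosed.isOpen_compl hsub hne1 hne2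
  obtain ⟨q0, hq0, hyball⟩ := Set.mem_iUnion₂.1 hyV1
  exact hyL (hεsub q0 hq0 y hyball (hCS hyC))
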